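/- Let k ∈ ℤ and t ∈ ℝ. For every complex z with |z−1| < 2 (and z ≠ −1 when k > 0), e^{ktz} (1+z)^{−k} = e^{kt} Σ_{m≥0} L_m^{(−k−m)}(−2kt) · (z−1)^m / 2^{m+k}, the series converging absolutely for |z−1| < 2. -/

import Mathlib

open scoped BigOperators

/-- Pochhammer symbol `(a)_k = a(a+1)⋯(a+k-1)` over ℝ. -/
noncomputable def pochR (a : ℝ) (k : ℕ) : ℝ := ∏ i ∈ Finset.range k, (a + i)

/-- Generalized Laguerre polynomial `L_n^{(α)}(x)` (real index `α`, possibly negative). -/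
noncomputable def Lag (n : ℕ) (α : ℝ) (x : ℝ) : ℝ :=
  (1 / (n.factorial : ℝ)) * ∑ j ∈ Finset.range (n + 1),
    (pochR (-(n : ℝ)) j / (j.factorial : ℝ)) * pochR (α + j + 1) (n - j) * x ^ j

lemma pochR_succ (a : ℝ) (n : ℕ) : pochR a (n + 1) = pochR a n * (a + n) :=
  Finset.prod_range_succ _ n

lemma pochR_neg_nat (K n : ℕ) :
    pochR (-(K : ℝ)) n = (-1) ^ n * (K.descFactorial n : ℝ) := by
  induction n with
  | zero => simp [pochR]
  | succ n ih =>
    rw [pochR_succ, ih, Nat.descFactorial_succ]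
    rcases lt_trichotomy n K with h | h | h
    · rw [Nat.cast_mul, Nat.cast_sub h.le]
      ring
    · subst h
      simp
    · have h0 : K.descFactorial n = 0 := Nat.descFactorial_of_lt h
      simp [h0]

lemma pochR_cast_nat (K n : ℕ) : pochR (K : ℝ) n = (K.ascFactorial n : ℝ) := by
  induction n with
  | zero => simp [pochR]
  | succ n ih =>
    rw [pochR_succ, ih, Nat.ascFactorial_succ]
    push_cast
    ring

lemma pochR_reflect (a : ℝ) (n : ℕ) :
    pochR (1 - a - n) n = (-1) ^ n * pochR a n := by
  unfold pochR
  rw [← Finset.prod_range_reflect (fun j => 1 - a - (n : ℝ) + (j : ℕ)) n]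
  have h : ∀ j ∈ Finset.range n,
      (1 - a - (n : ℝ) + ((n - 1 - j : ℕ) : ℝ)) = -1 * (a + j) := by
    intro j hj
    rw [Finset.mem_range] at hj
    have h1 : ((n - 1 - j : ℕ) : ℝ) = (n : ℝ) - 1 - j := by
      rw [Nat.cast_sub (by omega : j ≤ n - 1), Nat.cast_sub (by omega : 1 ≤ n)]
      norm_num
    rw [h1]; ring
  rw [Finset.prod_congr rfl h, Finset.prod_mul_distrib, Finset.prod_const,
    Finset.card_range]

lemma Lag_eval (k : ℤ) (m : ℕ) (x : ℝ) :
    Lag m (-(k : ℝ) - m) x = ∑ j ∈ Finset.range (m + 1),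
      ((-x) ^ j / (j.factorial : ℝ)) *
        ((-1) ^ (m - j) * pochR (k : ℝ) (m - j) / ((m - j).factorial : ℝ)) := by
  unfold Lag
  rw [Finset.mul_sum]
  refine Finset.sum_congr rfl ?_
  intro j hj
  rw [Finset.mem_range] at hj
  have hjm : j ≤ m := by omega
  have e2 : (-(k : ℝ) - m + j + 1) = 1 - (k : ℝ) - ((m - j : ℕ) : ℝ) := by
    rw [Nat.cast_sub hjm]; ring
  rw [pochR_neg_nat, e2, pochR_reflect]
  have e3 : (m.descFactorial j : ℝ) = (m.factorial : ℝ) / ((m - j).factorial : ℝ) := by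
    rw [eq_div_iff (Nat.cast_ne_zero.2 (m - j).factorial_ne_zero)]
    exact_mod_cast (mul_comm _ _).trans (Nat.factorial_mul_descFactorial hjm)
  rw [e3, neg_pow x j]
  have hm : (m.factorial : ℝ) ≠ 0 := Nat.cast_ne_zero.2 m.factorial_ne_zero
  have hmj : ((m - j).factorial : ℝ) ≠ 0 := Nat.cast_ne_zero.2 (m - j).factorial_ne_zero
  have hj' : (j.factorial : ℝ) ≠ 0 := Nat.cast_ne_zero.2 j.factorial_ne_zero
  field_simp

theorem stmt9 (k : ℤ) (t : ℝ) (z : ℂ) (hz : ‖z - 1‖ < 2)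
    (hz1 : 0 < k → z ≠ -1) :
    HasSum (fun m : ℕ => Complex.exp ((k : ℂ) * t) *
        ((Lag m (-(k : ℝ) - m) (-2 * k * t) : ℝ) : ℂ) * (z - 1) ^ m / (2 : ℂ) ^ ((m : ℤ) + k))
      (Complex.exp ((k : ℂ) * t * z) * (1 + z) ^ (-k)) := by
  set w : ℂ := (z - 1) / 2 with hwdef
  have hw1 : ‖w‖ < 1 := by
    rw [hwdef]
    rw [norm_div]
    rw [div_lt_one (by norm_num : (0:ℝ) < ‖(2:ℂ)‖)]
    simpa using hz
  have hwne : (1 : ℂ) + w ≠ 0 := by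
    intro h
    have hw : w = -1 := by linear_combination h
    rw [hw] at hw1
    simp at hw1
  have h2w : 2 * ((1 : ℂ) + w) = 1 + z := by rw [hwdef]; ring
  -- the two factor series
  set a : ℕ → ℂ := fun j => (2 * (k : ℂ) * t * w) ^ j / (j.factorial : ℂ) with hadef
  set c : ℕ → ℝ := fun n => (-1) ^ n * pochR (k : ℝ) n / (n.factorial : ℝ) with hcdef
  set b : ℕ → ℂ := fun n => ((c n : ℝ) : ℂ) * w ^ n with hbdef
  have ha : HasSum a (Complex.exp (2 * (k : ℂ) * t * w)) := by
    rw [Complex.exp_eq_exp_ℂ]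
    exact NormedSpace.expSeries_div_hasSum_exp _
  have ha' : Summable fun j => ‖a j‖ := by
    refine (Real.summable_pow_div_factorial ‖2 * (k : ℂ) * t * w‖).congr fun j => ?_
    simp [hadef, norm_div, norm_pow]
  have hb : HasSum b ((1 + w) ^ (-k)) ∧ Summable fun n => ‖b n‖ := by
    rcases le_or_gt k 0 with hk | hk
    · -- k ≤ 0 : finite sum, binomial theorem
      set K : ℕ := (-k).toNat with hKdef
      have hkK : (k : ℝ) = -(K : ℝ) := by
        have : ((-k).toNat : ℤ) = -k := Int.toNat_of_nonneg (by omega)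
        have h2 : (k : ℤ) = -(K : ℤ) := by omega
        exact_mod_cast congrArg (fun x : ℤ => (x : ℝ)) h2
      have hcn : ∀ n, c n = (K.choose n : ℝ) := by
        intro n
        rw [hcdef]
        simp only
        rw [hkK, pochR_neg_nat, Nat.descFactorial_eq_factorial_mul_choose]
        push_cast
        have hn : (n.factorial : ℝ) ≠ 0 := Nat.cast_ne_zero.2 n.factorial_ne_zero
        rw [div_eq_iff hn, ← mul_assoc, ← mul_pow]
        norm_num
        ring
      have hbn : ∀ n, b n = ((K.choose n : ℝ) : ℂ) * w ^ n := by
        intro n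
        simp only [hbdef, hcn]
      have hzero : ∀ n ∉ Finset.range (K + 1), b n = 0 := by
        intro n hn
        rw [Finset.mem_range, not_lt] at hn
        rw [hbn n, Nat.choose_eq_zero_of_lt (by omega)]
        simp
      have hsum : HasSum b (∑ n ∈ Finset.range (K + 1), b n) :=
        hasSum_sum_of_ne_finset_zero hzero
      have hval : (∑ n ∈ Finset.range (K + 1), b n) = (1 + w) ^ (-k) := by
        have hnk : -k = (K : ℤ) := by
          rw [hKdef]; omega
        rw [hnk, zpow_natCast]
        rw [show (1 : ℂ) + w = w + 1 by ring, add_pow]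
        refine Finset.sum_congr rfl fun n hn => ?_
        rw [hbn n]
        push_cast
        ring
      refine ⟨hval ▸ hsum, ?_⟩
      exact summable_of_ne_finset_zero (s := Finset.range (K + 1))
        (fun n hn => by rw [hzero n hn, norm_zero])
    · -- k > 0 : negative binomial series
      set K : ℕ := k.toNat with hKdef
      have hK1 : 1 ≤ K := by omega
      set κ : ℕ := K - 1 with hκdef
      have hKκ : K = κ + 1 := by omega
      have hkK : (k : ℝ) = (K : ℝ) := by
        have : (K : ℤ) = k := Int.toNat_of_nonneg (by omega)
        exact_mod_cast congrArg (fun x : ℤ => (x : ℝ)) this.symm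
      have hbn : ∀ n, b n = (((n + κ).choose κ : ℝ) : ℂ) * (-w) ^ n := by
        intro n
        rw [hbdef]
        simp only
        rw [neg_pow w n, hcdef]
        simp only
        rw [hkK, pochR_cast_nat]
        have hasc : K.ascFactorial n = n.factorial * (κ + n).choose n := by
          rw [hKκ]
          exact Nat.ascFactorial_eq_factorial_mul_choose κ n
        rw [hasc]
        have hch : (κ + n).choose n = (n + κ).choose κ := by
          rw [add_comm κ n]
          exact Nat.choose_symm_add
        rw [hch]
        have hn : (n.factorial : ℂ) ≠ 0 := Nat.cast_ne_zero.2 n.factorial_ne_zero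
        push_cast
        field_simp
      have hgeom : HasSum (fun n => (((n + κ).choose κ : ℝ) : ℂ) * (-w) ^ n)
          (1 / (1 - (-w)) ^ (κ + 1)) := by
        have := hasSum_choose_mul_geometric_of_norm_lt_one (𝕜 := ℂ) κ
          (r := -w) (by simpa using hw1)
        simpa using this
      have hval : (1 : ℂ) / (1 - (-w)) ^ (κ + 1) = (1 + w) ^ (-k) := by
        have hnk : -k = -((K : ℤ)) := by rw [hKdef]; omega
        rw [hnk, zpow_neg, zpow_natCast, sub_neg_eq_add, hKκ, one_div]
      refine ⟨?_, ?_⟩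
      · have := hgeom
        rw [hval] at this
        exact this.congr_fun fun n => hbn n
      · have hs := summable_choose_mul_geometric_of_norm_lt_one (R := ℝ) κ
          (r := ‖w‖) (by
            simpa [Real.norm_eq_abs, abs_of_nonneg (norm_nonneg w)] using hw1)
        refine hs.congr fun n => ?_
        rw [hbn n, norm_mul, norm_pow, norm_neg]
        norm_num
  obtain ⟨hb, hb'⟩ := hb
  -- Cauchy product
  have hAB : HasSum (fun m => ∑ j ∈ Finset.range (m + 1), a j * b (m - j))
      (Complex.exp (2 * (k : ℂ) * t * w) * (1 + w) ^ (-k)) := by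
    have := hasSum_sum_range_mul_of_summable_norm (R := ℂ) ha' hb'
    rwa [ha.tsum_eq, hb.tsum_eq] at this
  have final := hAB.mul_left (Complex.exp ((k : ℂ) * t) * (2 : ℂ) ^ (-k))
  have hg0 : (2 : ℂ) ^ k ≠ 0 := zpow_ne_zero k two_ne_zero
  -- identify the sum value
  have hsumval : Complex.exp ((k : ℂ) * t) * (2 : ℂ) ^ (-k) *
      (Complex.exp (2 * (k : ℂ) * t * w) * (1 + w) ^ (-k)) =
      Complex.exp ((k : ℂ) * t * z) * (1 + z) ^ (-k) := by
    have hexp : Complex.exp ((k : ℂ) * t) * Complex.exp (2 * (k : ℂ) * t * w) =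
        Complex.exp ((k : ℂ) * t * z) := by
      rw [← Complex.exp_add]
      congr 1
      rw [hwdef]
      field_simp
      ring
    have hpow : (2 : ℂ) ^ (-k) * (1 + w) ^ (-k) = (1 + z) ^ (-k) := by
      rw [← mul_zpow, h2w]
    calc Complex.exp ((k : ℂ) * t) * (2 : ℂ) ^ (-k) *
          (Complex.exp (2 * (k : ℂ) * t * w) * (1 + w) ^ (-k))
        = (Complex.exp ((k : ℂ) * t) * Complex.exp (2 * (k : ℂ) * t * w)) *
          ((2 : ℂ) ^ (-k) * (1 + w) ^ (-k)) := by ring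
      _ = _ := by rw [hexp, hpow]
  rw [hsumval] at final
  -- identify the terms
  refine final.congr_fun fun m => ?_
  have hterm : (∑ j ∈ Finset.range (m + 1), a j * b (m - j)) =
      ((Lag m (-(k : ℝ) - m) (-2 * k * t) : ℝ) : ℂ) * w ^ m := by
    rw [Lag_eval k m (-2 * k * t)]
    push_cast
    rw [Finset.sum_mul]
    refine Finset.sum_congr rfl fun j hj => ?_
    rw [Finset.mem_range] at hj
    have hjm : j ≤ m := by omega
    rw [hadef, hbdef, hcdef]
    simp only
    push_cast
    have hwpow : w ^ j * w ^ (m - j) = w ^ m := by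
      rw [← pow_add]
      congr 1
      omega
    have : (2 * (k : ℂ) * t * w) ^ j = (2 * (k : ℂ) * t) ^ j * w ^ j := by
      rw [mul_pow]
    rw [this]
    have h2kt : (-(-2 * (k : ℂ) * t)) ^ j = (2 * (k : ℂ) * t) ^ j := by
      norm_num
    rw [h2kt]
    calc (2 * (k : ℂ) * t) ^ j * w ^ j / (j.factorial : ℂ) *
          ((-1) ^ (m - j) * (pochR (k : ℝ) (m - j) : ℂ) / ((m - j).factorial : ℂ) * w ^ (m - j))
        = ((2 * (k : ℂ) * t) ^ j / (j.factorial : ℂ) *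
          ((-1) ^ (m - j) * (pochR (k : ℝ) (m - j) : ℂ) / ((m - j).factorial : ℂ))) *
          (w ^ j * w ^ (m - j)) := by ring
      _ = _ := by rw [hwpow]
  rw [hterm]
  -- final algebraic rearrangement
  have hpow2 : (2 : ℂ) ^ ((m : ℤ) + k) = 2 ^ m * (2 : ℂ) ^ k := by
    rw [zpow_add₀ (two_ne_zero) (m : ℤ) k, zpow_natCast]
  rw [hpow2, hwdef, zpow_neg]
  have h2m : ((2 : ℂ)) ^ m ≠ 0 := pow_ne_zero m two_ne_zero
  field_simp
  have h2z : (2 : ℂ) ^ m * ((z - 1) / 2) ^ m = (z - 1) ^ m := by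
    rw [← mul_pow]
    congr 1
    ring
  rw [mul_assoc _ ((2 : ℂ) ^ m), h2z]
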